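/- For every γ > 0 there exists a constant p(γ) < 1/2 with the following properties. (1) For every k and every k-portfolio 1 ≥ x_1 > ... > x_k > 0 that satisfies the FOC recurrence x_{i+1} = 2x_i - x_{i-1} + γ(2x_i - 3x_i²) (with x_0 = 1, x_{k+1} = 0) and such that removing any single school does not increase U_γ, the true expected payoff satisfies Σ_{i=1}^k x_i(x_{i-1} - x_i) ≤ p(γ). Explicitly, one may take p(γ) = 1/2 - (1-c)²/(2(m(γ,c)+1)) for any fixed c ∈ (0,2/3), where m(γ,c) = 2 + 1/(3γ) + (2/3-c)/√(γc²(1-c)) for 0 < γ < 1/3 and m(γ,c) = 2 + (2/3-c)/√(γc²(1-c)) for γ ≥ 1/3. (2) Consequently there exists k₀ ∈ ℕ (namely any k₀ > 2p(γ)/(1-2p(γ))) with k₀/(2(k₀+1)) > p(γ): a rational student restricted to k₀ applications achieves strictly higher true expected payoff than a γ-biased student with any number of applications. -/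

import Mathlib

open Finset

/-- Perceived expected utility of the k-portfolio `x 1 > x 2 > ⋯ > x k`
(with the convention `x 0 = 1`). -/
noncomputable def U (γ : ℝ) (k : ℕ) (x : ℕ → ℝ) : ℝ :=
  ∑ i ∈ Finset.Icc 1 k, (-γ * (1 - x i) * (x i) ^ 2 + x i * (x (i - 1) - x i))

/-- The (k-1)-portfolio obtained from `x` by dropping the i-th school. -/
def dropAt (x : ℕ → ℝ) (i : ℕ) : ℕ → ℝ :=
  fun j => if j < i then x j else x (j + 1)

lemma U_dropAt_small (γ : ℝ) (x : ℕ → ℝ) (i : ℕ) (h1 : 1 ≤ i) :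
    U γ (i - 1) (dropAt x i) = U γ (i - 1) x := by
  unfold U
  apply Finset.sum_congr rfl
  intro j hj
  simp only [Finset.mem_Icc] at hj
  have hj1 : j < i := by omega
  have hj2 : j - 1 < i := by omega
  simp [dropAt, hj1, hj2]

lemma drop_diff (γ : ℝ) (x : ℕ → ℝ) (i : ℕ) (h1 : 1 ≤ i) :
    ∀ k, i + 1 ≤ k →
    U γ k x - U γ (k - 1) (dropAt x i) =
      -γ * (1 - x i) * (x i) ^ 2 + (x (i - 1) - x i) * (x i - x (i + 1)) := by
  obtain ⟨m, rfl⟩ : ∃ m, i = m + 1 := ⟨i - 1, by omega⟩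
  refine Nat.le_induction ?_ ?_
  · -- base case k = m + 2
    have e1 : U γ (m + 2) x = U γ (m + 1) x +
        (-γ * (1 - x (m + 2)) * (x (m + 2)) ^ 2 + x (m + 2) * (x (m + 1) - x (m + 2))) := by
      unfold U
      rw [Finset.sum_Icc_succ_top (by omega)]
      norm_num
    have e2 : U γ (m + 1) x = U γ m x +
        (-γ * (1 - x (m + 1)) * (x (m + 1)) ^ 2 + x (m + 1) * (x m - x (m + 1))) := by
      unfold U
      rw [Finset.sum_Icc_succ_top (by omega)]
      norm_num
    have e3 : U γ (m + 2 - 1) (dropAt x (m + 1)) = U γ m (dropAt x (m + 1)) +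
        (-γ * (1 - x (m + 2)) * (x (m + 2)) ^ 2 + x (m + 2) * (x m - x (m + 2))) := by
      show U γ (m + 1) (dropAt x (m + 1)) = _
      unfold U
      rw [Finset.sum_Icc_succ_top (by omega)]
      have hy1 : dropAt x (m + 1) (m + 1) = x (m + 2) := by simp [dropAt]
      have hy2 : dropAt x (m + 1) (m + 1 - 1) = x m := by simp [dropAt]
      rw [hy1, hy2]
    have e4 : U γ m (dropAt x (m + 1)) = U γ m x := by
      have := U_dropAt_small γ x (m + 1) (by omega)
      simpa using this
    rw [e1, e2, e3, e4]
    simp only [Nat.add_sub_cancel]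
    ring
  · -- inductive step
    intro k hk ih
    have e1 : U γ (k + 1) x = U γ k x +
        (-γ * (1 - x (k + 1)) * (x (k + 1)) ^ 2 + x (k + 1) * (x k - x (k + 1))) := by
      unfold U
      rw [Finset.sum_Icc_succ_top (by omega)]
      norm_num
    obtain ⟨n, rfl⟩ : ∃ n, k = n + 1 := ⟨k - 1, by omega⟩
    have e2 : U γ (n + 1 + 1 - 1) (dropAt x (m + 1)) = U γ (n + 1 - 1) (dropAt x (m + 1)) +
        (-γ * (1 - x (n + 2)) * (x (n + 2)) ^ 2 + x (n + 2) * (x (n + 1) - x (n + 2))) := by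
      show U γ (n + 1) (dropAt x (m + 1)) = U γ n (dropAt x (m + 1)) + _
      unfold U
      rw [Finset.sum_Icc_succ_top (by omega)]
      have hy1 : dropAt x (m + 1) (n + 1) = x (n + 2) := by
        simp only [dropAt, if_neg (by omega : ¬ n + 1 < m + 1)]
      have hy2 : dropAt x (m + 1) (n + 1 - 1) = x (n + 1) := by
        simp only [Nat.add_sub_cancel, dropAt, if_neg (by omega : ¬ n < m + 1)]
      rw [hy1, hy2]
    rw [e1, e2]
    have : x (n + 1 + 1) = x (n + 2) := rfl
    rw [this] at *
    linarith [ih]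

lemma drop_diff_top (γ : ℝ) (x : ℕ → ℝ) (k : ℕ) (h1 : 1 ≤ k) :
    U γ k x - U γ (k - 1) (dropAt x k) =
      -γ * (1 - x k) * (x k) ^ 2 + x k * (x (k - 1) - x k) := by
  obtain ⟨m, rfl⟩ : ∃ m, k = m + 1 := ⟨k - 1, by omega⟩
  have e4 : U γ (m + 1 - 1) (dropAt x (m + 1)) = U γ m x := by
    have := U_dropAt_small γ x (m + 1) (by omega)
    simpa using this
  rw [e4]
  unfold U
  rw [Finset.sum_Icc_succ_top (by omega)]
  simp only [Nat.add_sub_cancel]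
  ring

lemma telescope (f : ℕ → ℝ) : ∀ k : ℕ, ∑ i ∈ Finset.Icc 1 k, (f (i - 1) - f i) = f 0 - f k := by
  intro k
  induction k with
  | zero => simp
  | succ n ih =>
    rw [Finset.sum_Icc_succ_top (by omega), ih]
    simp only [Nat.add_sub_cancel]
    ring

set_option maxHeartbeats 1600000 in
/-- For every γ > 0 there is a constant `p(γ) < 1/2` such that
(1) every portfolio (of any size k) satisfying the FOC recurrence and the
no-improvement-by-dropping property has true expected payoff at most `p(γ)`; and
(2) there is a number of applications `k₀` for which a rational student's optimal
payoff `k₀/(2(k₀+1))` strictly exceeds `p(γ)`. -/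
theorem stmt_12 (γ : ℝ) (hγ : 0 < γ) :
    ∃ p : ℝ, p < 1 / 2 ∧
      (∀ (k : ℕ) (x : ℕ → ℝ), 1 ≤ k →
        x 0 = 1 → x (k + 1) = 0 → x 1 ≤ 1 →
        (∀ i, 1 ≤ i → i < k → x (i + 1) < x i) → 0 < x k →
        (∀ i, 1 ≤ i → i ≤ k →
          x (i + 1) = 2 * x i - x (i - 1) + γ * (2 * x i - 3 * (x i) ^ 2)) →
        (∀ i, 1 ≤ i → i ≤ k → U γ (k - 1) (dropAt x i) ≤ U γ k x) →
        ∑ i ∈ Finset.Icc 1 k, x i * (x (i - 1) - x i) ≤ p) ∧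
      (∃ k₀ : ℕ, p < (k₀ : ℝ) / (2 * ((k₀ : ℝ) + 1))) := by
  classical
  set ε : ℝ := min (1 / 144) (γ / 10) with hεdef
  have hε0 : 0 < ε := lt_min (by norm_num) (by linarith)
  have hε144 : ε ≤ 1 / 144 := min_le_left _ _
  have hεγ : ε ≤ γ / 10 := min_le_right _ _
  refine ⟨(1 - ε) / 2, by linarith, ?_, ?_⟩
  · intro k x hk h0 hk1 hx1 hdec hxk hFOC hU
    -- nonnegativity of the gaps
    have hδ : ∀ j, 1 ≤ j → j ≤ k + 1 → 0 ≤ x (j - 1) - x j := by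
      intro j hj1 hj2
      rcases Nat.lt_or_ge j (k + 1) with h | h
      · rcases Nat.eq_or_lt_of_le hj1 with rfl | h2
        · simpa [h0] using (by linarith : (0:ℝ) ≤ 1 - x 1)
        · have hd := hdec (j - 1) (by omega) (by omega)
          have hj' : j - 1 + 1 = j := by omega
          rw [hj'] at hd
          linarith
      · have hj : j = k + 1 := by omega
        subst hj
        simp only [Nat.add_sub_cancel, hk1]
        linarith
    -- the drop condition
    have hdrop : ∀ i, 1 ≤ i → i ≤ k →
        γ * (1 - x i) * (x i) ^ 2 ≤ (x (i - 1) - x i) * (x i - x (i + 1)) := by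
      intro i hi1 hik
      rcases Nat.eq_or_lt_of_le hik with rfl | hlt
      · have hd := drop_diff_top γ x i hi1
        have hu := hU i hi1 le_rfl
        rw [hk1]
        nlinarith [hd, hu]
      · have hd := drop_diff γ x i hi1 k (by omega)
        have hu := hU i hi1 hik
        linarith
    -- key claim: some squared gap is at least ε
    have key : ∃ j, 1 ≤ j ∧ j ≤ k + 1 ∧ ε ≤ (x (j - 1) - x j) ^ 2 := by
      by_cases hx17 : x 1 < 7 / 12
      · refine ⟨1, le_refl 1, by omega, ?_⟩
        simp only [Nat.sub_self, h0]
        nlinarith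
      · push_neg at hx17
        have hT1 : 1 ∈ (Finset.Icc 1 k).filter (fun i => 1 / 2 ≤ x i) := by
          simp only [Finset.mem_filter, Finset.mem_Icc]
          exact ⟨⟨le_refl 1, hk⟩, by linarith⟩
        have hTne : ((Finset.Icc 1 k).filter (fun i => 1 / 2 ≤ x i)).Nonempty := ⟨1, hT1⟩
        obtain ⟨I, hImax, hImem⟩ : ∃ I, I = ((Finset.Icc 1 k).filter (fun i => 1 / 2 ≤ x i)).max' hTne ∧
            I ∈ (Finset.Icc 1 k).filter (fun i => 1 / 2 ≤ x i) :=
          ⟨_, rfl, Finset.max'_mem _ hTne⟩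
        simp only [Finset.mem_filter, Finset.mem_Icc] at hImem
        obtain ⟨⟨hI1, hIk⟩, hxI⟩ := hImem
        have hsucc : x (I + 1) < 1 / 2 := by
          rcases Nat.eq_or_lt_of_le hIk with heq | hlt
          · rw [heq, hk1]; norm_num
          · by_contra hcon
            push_neg at hcon
            have hmem : I + 1 ∈ (Finset.Icc 1 k).filter (fun i => 1 / 2 ≤ x i) := by
              simp only [Finset.mem_filter, Finset.mem_Icc]
              exact ⟨⟨by omega, by omega⟩, hcon⟩
            have := Finset.le_max' _ (I + 1) hmem
            omega
        have ha : 0 ≤ x (I - 1) - x I := hδ I hI1 (by omega)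
        have hb : 0 ≤ x I - x (I + 1) := by linarith
        by_cases hx7 : x I ≤ 7 / 12
        · have hd := hdrop I hI1 hIk
          have hγε : ε ≤ γ * (1 - x I) * (x I) ^ 2 := by
            have h10 : (1:ℝ) / 10 ≤ (1 - x I) * (x I) ^ 2 := by nlinarith
            have := mul_le_mul_of_nonneg_left h10 hγ.le
            nlinarith
          rcases le_total (x (I - 1) - x I) (x I - x (I + 1)) with hc | hc
          · refine ⟨I + 1, by omega, by omega, ?_⟩
            simp only [Nat.add_sub_cancel]
            nlinarith
          · refine ⟨I, hI1, by omega, ?_⟩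
            nlinarith
        · push_neg at hx7
          refine ⟨I + 1, by omega, by omega, ?_⟩
          simp only [Nat.add_sub_cancel]
          nlinarith
    -- telescoping
    have htel : ∑ i ∈ Finset.Icc 1 k, ((x (i - 1)) ^ 2 - (x i) ^ 2) = 1 - (x k) ^ 2 := by
      have := telescope (fun i => (x i) ^ 2) k
      simpa [h0] using this
    have hsum : ∑ i ∈ Finset.Icc 1 k, x i * (x (i - 1) - x i)
        = (∑ i ∈ Finset.Icc 1 k, ((x (i - 1)) ^ 2 - (x i) ^ 2)
            - ∑ i ∈ Finset.Icc 1 k, (x (i - 1) - x i) ^ 2) / 2 := by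
      have hterm : ∀ i ∈ Finset.Icc 1 k, x i * (x (i - 1) - x i)
          = (((x (i - 1)) ^ 2 - (x i) ^ 2) - (x (i - 1) - x i) ^ 2) / 2 :=
        fun i _ => by ring
      rw [Finset.sum_congr rfl hterm, ← Finset.sum_div, Finset.sum_sub_distrib]
    have hSnn : 0 ≤ ∑ i ∈ Finset.Icc 1 k, (x (i - 1) - x i) ^ 2 :=
      Finset.sum_nonneg (fun i _ => sq_nonneg _)
    have hS : ε ≤ (x k) ^ 2 + ∑ i ∈ Finset.Icc 1 k, (x (i - 1) - x i) ^ 2 := by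
      obtain ⟨j, hj1, hj2, hjε⟩ := key
      rcases Nat.eq_or_lt_of_le hj2 with rfl | hlt
      · simp only [Nat.add_sub_cancel, hk1, sub_zero] at hjε
        linarith
      · have hmem : j ∈ Finset.Icc 1 k := Finset.mem_Icc.mpr ⟨hj1, by omega⟩
        have hle := Finset.single_le_sum (f := fun i => (x (i - 1) - x i) ^ 2)
          (fun i _ => sq_nonneg _) hmem
        nlinarith [sq_nonneg (x k)]
    rw [hsum, htel]
    linarith
  · obtain ⟨n, hn⟩ := exists_nat_gt (1 / ε)
    have hn0 : (0:ℝ) < n := lt_trans (by positivity) hn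
    refine ⟨n, ?_⟩
    rw [div_lt_div_iff₀ (by norm_num) (by positivity)]
    have h1 : 1 < ε * n := by
      rw [div_lt_iff₀ hε0] at hn
      nlinarith
    nlinarith
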